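/- Let K be a regular incidence complex of rank n ≥ 1 with base flag Φ = {F_{-1}, F_0, ..., F_n}, and let Γ be a flag-transitive subgroup of Aut(K). For i ∈ {-1,0,...,n} let R_i be the stabilizer in Γ of Φ \ {F_i}. Then for every subset J of {-1,0,...,n}, the stabilizer in Γ of the subchain Φ_J = {F_j : j ∈ J} equals the subgroup generated by the R_j with j ∉ J. -/

import Mathlib

open Set Pointwise

/-- `Φ` is a flag of the subset `s` of the poset `α`: a chain contained in `s`
that is maximal among chains contained in `s`. -/
def IsFlagOf {α : Type*} [PartialOrder α] (s Φ : Set α) : Prop :=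
  Φ ⊆ s ∧ IsChain (· ≤ ·) Φ ∧
    ∀ Ψ : Set α, Ψ ⊆ s → IsChain (· ≤ ·) Ψ → Φ ⊆ Ψ → Ψ = Φ

/-- Two flags are adjacent if each differs from the other in exactly one face. -/
def FlagAdj {α : Type*} [PartialOrder α] (Φ Ψ : Set α) : Prop :=
  (Φ \ Ψ).ncard = 1 ∧ (Ψ \ Φ).ncard = 1

/-- The set `s` is flag-connected: any two flags of `s` are joined by a sequence
of successively adjacent flags of `s`. -/
def FlagConnIn {α : Type*} [PartialOrder α] (s : Set α) : Prop :=
  ∀ Φ Ψ : Set α, IsFlagOf s Φ → IsFlagOf s Ψ →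
    Relation.ReflTransGen
      (fun A B => IsFlagOf s A ∧ IsFlagOf s B ∧ FlagAdj A B) Φ Ψ

/-- The section between `F` and `G` is connected: any two of its proper faces are
joined by a finite sequence of successively incident proper faces of the section. -/
def ConnIn {α : Type*} [PartialOrder α] (F G : α) : Prop :=
  ∀ H K : α, F < H → H < G → F < K → K < G →
    Relation.ReflTransGen
      (fun a b => F < a ∧ a < G ∧ F < b ∧ b < G ∧ (a ≤ b ∨ b ≤ a)) H K

/-- An incidence complex of rank `n`: a bounded ranked poset (rank function `rk`
with range `{-1,…,n}`, strictly monotone, all flags having `n+2` elements hitting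
every rank), strongly connected (I3), and with at least two `i`-faces between any
incident pair of faces of ranks `i-1` and `i+1` (I4). -/
structure IncComplex (α : Type*) [PartialOrder α] [BoundedOrder α]
    (n : ℤ) (rk : α → ℤ) : Prop where
  rk_bot : rk (⊥ : α) = -1
  rk_top : rk (⊤ : α) = n
  rk_strictMono : ∀ a b : α, a < b → rk a < rk b
  chain_flag : ∀ c : Set α, IsChain (· ≤ ·) c →
    ∃ Φ : Set α, c ⊆ Φ ∧ IsFlagOf Set.univ Φ ∧ Φ.ncard = (n + 2).toNat
  flag_rk : ∀ Φ : Set α, IsFlagOf Set.univ Φ →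
    ∀ i ∈ Set.Icc (-1 : ℤ) n, ∃ a ∈ Φ, rk a = i
  strong_conn : ∀ F G : α, F ≤ G → 2 ≤ rk G - rk F - 1 → ConnIn F G
  two_between : ∀ F G : α, F < G → rk G = rk F + 2 →
    ∃ H H' : α, H ≠ H' ∧ F < H ∧ H < G ∧ F < H' ∧ H' < G

section Helpers

variable {α : Type*} [PartialOrder α] [BoundedOrder α] {n : ℤ} {rk : α → ℤ}

lemma IncComplex.rk_mem (hK : IncComplex α n rk) (a : α) : rk a ∈ Set.Icc (-1 : ℤ) n := by
  constructor
  · rcases eq_or_lt_of_le (bot_le : ⊥ ≤ a) with h | h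
    · rw [← h, hK.rk_bot]
    · have := hK.rk_strictMono _ _ h; rw [hK.rk_bot] at this; linarith
  · rcases eq_or_lt_of_le (le_top : a ≤ ⊤) with h | h
    · rw [h, hK.rk_top]
    · have := hK.rk_strictMono _ _ h; rw [hK.rk_top] at this; linarith

lemma IncComplex.eq_bot (hK : IncComplex α n rk) {a : α} (h : rk a = -1) : a = ⊥ := by
  rcases eq_or_lt_of_le (bot_le : ⊥ ≤ a) with h' | h'
  · exact h'.symm
  · have := hK.rk_strictMono _ _ h'; rw [hK.rk_bot, h] at this; omega

lemma IncComplex.eq_top (hK : IncComplex α n rk) {a : α} (h : rk a = n) : a = ⊤ := by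
  rcases eq_or_lt_of_le (le_top : a ≤ ⊤) with h' | h'
  · exact h'
  · have := hK.rk_strictMono _ _ h'; rw [hK.rk_top] at this; omega

lemma IncComplex.lt_of_rk_lt (hK : IncComplex α n rk) {a b : α} (hc : a ≤ b ∨ b ≤ a)
    (h : rk a < rk b) : a < b := by
  rcases hc with h' | h'
  · rcases eq_or_lt_of_le h' with rfl | h'' 
    · omega
    · exact h''
  · rcases eq_or_lt_of_le h' with rfl | h''
    · omega
    · exact absurd (hK.rk_strictMono _ _ h'') (by omega)

lemma IncComplex.rk_injOn (hK : IncComplex α n rk) {c : Set α} (hc : IsChain (· ≤ ·) c) :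
    Set.InjOn rk c := by
  intro x hx y hy hxy
  by_contra hne
  rcases hc hx hy hne with h | h
  · have := hK.rk_strictMono _ _ (lt_of_le_of_ne h hne); omega
  · have := hK.rk_strictMono _ _ (lt_of_le_of_ne h (Ne.symm hne)); omega

lemma IncComplex.chain_finite (hK : IncComplex α n rk) {c : Set α} (hc : IsChain (· ≤ ·) c) :
    c.Finite := by
  apply Set.Finite.of_finite_image _ (hK.rk_injOn hc)
  exact (Set.finite_Icc (-1 : ℤ) n).subset (by rintro _ ⟨x, -, rfl⟩; exact hK.rk_mem x)

lemma ncard_Icc' (n : ℤ) : (Set.Icc (-1 : ℤ) n).ncard = (n + 2).toNat := by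
  rw [← Finset.coe_Icc, Set.ncard_coe_finset, Int.card_Icc]
  congr 1; omega

lemma IncComplex.chain_ncard_le (hK : IncComplex α n rk) {c : Set α} (hc : IsChain (· ≤ ·) c) :
    c.ncard ≤ (n + 2).toNat := by
  rw [← Set.ncard_image_of_injOn (hK.rk_injOn hc), ← ncard_Icc' n]
  exact Set.ncard_le_ncard (by rintro _ ⟨x, -, rfl⟩; exact hK.rk_mem x)
    (Set.finite_Icc _ _)

lemma IncComplex.flag_iff (hK : IncComplex α n rk) {Φ : Set α} :
    IsFlagOf Set.univ Φ ↔ IsChain (· ≤ ·) Φ ∧ Φ.ncard = (n + 2).toNat := by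
  constructor
  · rintro h
    refine ⟨h.2.1, ?_⟩
    obtain ⟨Φ', hsub, hflag', hcard⟩ := hK.chain_flag Φ h.2.1
    rw [h.2.2 Φ' (Set.subset_univ _) hflag'.2.1 hsub] at hcard
    exact hcard
  · rintro ⟨hchain, hcard⟩
    refine ⟨Set.subset_univ _, hchain, fun Ψ _ hΨchain hsub => ?_⟩
    have hfin : Ψ.Finite := hK.chain_finite hΨchain
    refine (Set.eq_of_subset_of_ncard_le hsub ?_ hfin).symm
    rw [hcard]; exact hK.chain_ncard_le hΨchain

lemma IncComplex.flag_ncard (hK : IncComplex α n rk) {Φ : Set α} (h : IsFlagOf Set.univ Φ) :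
    Φ.ncard = (n + 2).toNat := ((hK.flag_iff).mp h).2

lemma IncComplex.flag_finite (hK : IncComplex α n rk) {Φ : Set α} (h : IsFlagOf Set.univ Φ) :
    Φ.Finite := hK.chain_finite h.2.1

/-- an order iso maps flags to flags -/
lemma IncComplex.flag_image (hK : IncComplex α n rk) {Φ : Set α} (g : α ≃o α)
    (h : IsFlagOf Set.univ Φ) : IsFlagOf Set.univ (⇑g '' Φ) := by
  rw [hK.flag_iff] at h ⊢
  refine ⟨h.1.image_of_map_rel _ _ _ (fun x y hxy => g.monotone hxy), ?_⟩
  rw [Set.ncard_image_of_injective _ g.injective, h.2]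

end Helpers

section Helpers2

variable {α : Type*} [PartialOrder α] [BoundedOrder α] {n : ℤ} {rk : α → ℤ}
variable {F : ℤ → α}

/-- the base-flag enumeration is strictly monotone on ranks -/
lemma F_strictMonoOn (hK : IncComplex α n rk)
    (hFflag : IsFlagOf Set.univ (F '' Set.Icc (-1 : ℤ) n))
    (hFrk : ∀ i ∈ Set.Icc (-1 : ℤ) n, rk (F i) = i)
    {i j : ℤ} (hi : i ∈ Set.Icc (-1 : ℤ) n) (hj : j ∈ Set.Icc (-1 : ℤ) n)
    (hij : i < j) : F i < F j := by
  have hiF : F i ∈ F '' Set.Icc (-1 : ℤ) n := ⟨i, hi, rfl⟩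
  have hjF : F j ∈ F '' Set.Icc (-1 : ℤ) n := ⟨j, hj, rfl⟩
  have hne : F i ≠ F j := by
    intro h
    have := hFrk i hi; rw [h, hFrk j hj] at this; omega
  refine hK.lt_of_rk_lt (hFflag.2.1 hiF hjF hne) ?_
  rw [hFrk i hi, hFrk j hj]; exact hij

/-- any order automorphism preserves ranks on the base flag -/
lemma rk_apply_F (hK : IncComplex α n rk) (hn : 1 ≤ n)
    (hFflag : IsFlagOf Set.univ (F '' Set.Icc (-1 : ℤ) n))
    (hFrk : ∀ i ∈ Set.Icc (-1 : ℤ) n, rk (F i) = i)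
    (r : α ≃o α) {j : ℤ} (hj : j ∈ Set.Icc (-1 : ℤ) n) :
    rk (r (F j)) = j := by
  set k := (n + 2).toNat with hk
  have hkn : (k : ℤ) = n + 2 := Int.toNat_of_nonneg (by omega)
  have hs : (Finset.Icc (-1 : ℤ) n).card = k := by
    rw [Int.card_Icc, hk]; congr 1; omega
  have hidx : ∀ t : Fin k, (t : ℤ) - 1 ∈ Set.Icc (-1 : ℤ) n := by
    intro t
    have := t.isLt
    have : (t : ℤ) < (k : ℤ) := by exact_mod_cast this
    simp only [Set.mem_Icc]; omega
  have hmono : StrictMono (fun t : Fin k => rk (r (F ((t : ℤ) - 1)))) := by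
    intro t t' htt
    have h1 : ((t : ℤ) - 1) < ((t' : ℤ) - 1) := by
      have : (t : ℤ) < (t' : ℤ) := by exact_mod_cast htt
      omega
    exact hK.rk_strictMono _ _
      (r.strictMono (F_strictMonoOn hK hFflag hFrk (hidx t) (hidx t') h1))
  have hmem : ∀ t : Fin k, rk (r (F ((t : ℤ) - 1))) ∈ Finset.Icc (-1 : ℤ) n := by
    intro t; rw [Finset.mem_Icc]; exact hK.rk_mem _
  have hmono' : StrictMono (fun t : Fin k => (t : ℤ) - 1) := by
    intro t t' htt
    have : (t : ℤ) < (t' : ℤ) := by exact_mod_cast htt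
    simp only; omega
  have hmem' : ∀ t : Fin k, (t : ℤ) - 1 ∈ Finset.Icc (-1 : ℤ) n := by
    intro t; rw [Finset.mem_Icc]; have := hidx t; simpa using this
  have heq := (Finset.orderEmbOfFin_unique hs hmem hmono).trans
    (Finset.orderEmbOfFin_unique hs hmem' hmono').symm
  rw [Set.mem_Icc] at hj
  have htlt : (j + 1).toNat < k := by omega
  have := congrFun heq ⟨(j + 1).toNat, htlt⟩
  simp only at this
  have hcast : ((⟨(j + 1).toNat, htlt⟩ : Fin k) : ℤ) = j + 1 := by
    simp [Int.toNat_of_nonneg (by omega : (0:ℤ) ≤ j + 1)]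
  rw [hcast] at this
  simpa using this

/-- if `r` maps the base flag onto a flag `Λ` and `F j ∈ Λ`, then `r` fixes `F j` -/
lemma fixes_of_mem (hK : IncComplex α n rk) (hn : 1 ≤ n)
    (hFflag : IsFlagOf Set.univ (F '' Set.Icc (-1 : ℤ) n))
    (hFrk : ∀ i ∈ Set.Icc (-1 : ℤ) n, rk (F i) = i)
    (r : α ≃o α) {Λ : Set α} (hΛ : IsFlagOf Set.univ Λ)
    (him : ⇑r '' (F '' Set.Icc (-1 : ℤ) n) = Λ)
    {j : ℤ} (hj : j ∈ Set.Icc (-1 : ℤ) n) (hjΛ : F j ∈ Λ) : r (F j) = F j := by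
  have h1 : r (F j) ∈ Λ := him ▸ ⟨F j, ⟨j, hj, rfl⟩, rfl⟩
  exact hK.rk_injOn hΛ.2.1 h1 hjΛ
    (by rw [rk_apply_F hK hn hFflag hFrk r hj, hFrk j hj])

end Helpers2

section Helpers3

variable {α : Type*} [PartialOrder α] [BoundedOrder α] {n : ℤ} {rk : α → ℤ}

/-- Strong flag-connectedness relative to a chain `C` containing `⊥` and `⊤`:
any two flags containing `C` are joined by a sequence of successively adjacent
flags all containing `C`. -/
lemma chain_flag_conn (hK : IncComplex α n rk) :
    ∀ (m : ℕ) (C : Set α), IsChain (· ≤ ·) C → ⊥ ∈ C → ⊤ ∈ C →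
      (n + 2).toNat - C.ncard ≤ m →
      ∀ Φ Ψ : Set α, IsFlagOf Set.univ Φ → IsFlagOf Set.univ Ψ → C ⊆ Φ → C ⊆ Ψ →
      Relation.ReflTransGen
        (fun A B => (IsFlagOf Set.univ A ∧ C ⊆ A) ∧
          (IsFlagOf Set.univ B ∧ C ⊆ B) ∧ FlagAdj A B) Φ Ψ := by
  intro m
  induction m with
  | zero =>
    intro C hC hbot htop hm Φ Ψ hΦ hΨ hCΦ hCΨ
    have hcard : (n + 2).toNat ≤ C.ncard := by omega
    have h1 : C = Φ := Set.eq_of_subset_of_ncard_le hCΦ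
      (le_trans (le_of_eq (hK.flag_ncard hΦ)) hcard) (hK.flag_finite hΦ)
    have h2 : C = Ψ := Set.eq_of_subset_of_ncard_le hCΨ
      (le_trans (le_of_eq (hK.flag_ncard hΨ)) hcard) (hK.flag_finite hΨ)
    rw [← h1, ← h2]
  | succ m ih =>
    intro C hC hbot htop hm Φ Ψ hΦ hΨ hCΦ hCΨ
    have hCfin : C.Finite := hK.chain_finite hC
    -- recursion with an enlarged chain
    have hrec : ∀ x : α, x ∉ C → (∀ z ∈ C, x ≠ z → x ≤ z ∨ z ≤ x) →
        ∀ Φ' Ψ' : Set α, IsFlagOf Set.univ Φ' → IsFlagOf Set.univ Ψ' →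
        insert x C ⊆ Φ' → insert x C ⊆ Ψ' →
        Relation.ReflTransGen
          (fun A B => (IsFlagOf Set.univ A ∧ C ⊆ A) ∧
            (IsFlagOf Set.univ B ∧ C ⊆ B) ∧ FlagAdj A B) Φ' Ψ' := by
      intro x hx hcomp Φ' Ψ' h1 h2 h3 h4
      have hchain : IsChain (· ≤ ·) (insert x C) := hC.insert (fun z hz hne => hcomp z hz hne)
      have hbot' : ⊥ ∈ insert x C := Set.mem_insert_of_mem _ hbot
      have htop' : ⊤ ∈ insert x C := Set.mem_insert_of_mem _ htop
      have hm' : (n + 2).toNat - (insert x C).ncard ≤ m := by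
        rw [Set.ncard_insert_of_notMem hx hCfin]; omega
      exact Relation.ReflTransGen.mono
        (fun A B hAB => ⟨⟨hAB.1.1, (Set.subset_insert x C).trans hAB.1.2⟩,
          ⟨hAB.2.1.1, (Set.subset_insert x C).trans hAB.2.1.2⟩, hAB.2.2⟩) _ _
        (ih (insert x C) hchain hbot' htop' hm' Φ' Ψ' h1 h2 h3 h4)
    by_cases hEQ : Φ = Ψ
    · rw [hEQ]
    by_cases hH : ∀ H ∈ Φ, H ∈ Ψ → H ∈ C
    swap
    · push_neg at hH
      obtain ⟨H, h1, h2, h3⟩ := hH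
      exact hrec H h3 (fun z hz hne => hΦ.2.1 h1 (hCΦ hz) hne) Φ Ψ hΦ hΨ
        (Set.insert_subset h1 hCΦ) (Set.insert_subset h2 hCΨ)
    -- now Φ ∩ Ψ ⊆ C; pick a ∈ Φ \ Ψ
    have hns : ¬ Φ ⊆ Ψ := by
      intro hsub
      exact hEQ (Set.eq_of_subset_of_ncard_le hsub
        (by rw [hK.flag_ncard hΦ, hK.flag_ncard hΨ]) (hK.flag_finite hΨ))
    obtain ⟨a, haΦ, haΨ⟩ := Set.not_subset.mp hns
    have haC : a ∉ C := fun h => haΨ (hCΨ h)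
    have hi1 : -1 < rk a := by
      rcases lt_or_eq_of_le (hK.rk_mem a).1 with h | h
      · exact h
      · exact absurd (hK.eq_bot h.symm ▸ hbot) haC
    have hi2 : rk a < n := by
      rcases lt_or_eq_of_le (hK.rk_mem a).2 with h | h
      · exact h
      · exact absurd (hK.eq_top h ▸ htop) haC
    -- c : the face of C of maximal rank below rk a ; c' : minimal above
    obtain ⟨c, ⟨hcC, hci⟩, hcmax⟩ := Set.exists_max_image {z ∈ C | rk z < rk a} rk
      (hCfin.subset (Set.sep_subset _ _)) ⟨⊥, hbot, by rw [hK.rk_bot]; omega⟩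
    obtain ⟨c', ⟨hc'C, hic'⟩, hc'min⟩ := Set.exists_min_image {z ∈ C | rk a < rk z} rk
      (hCfin.subset (Set.sep_subset _ _)) ⟨⊤, htop, by rw [hK.rk_top]; omega⟩
    have hsplit : ∀ z ∈ C, rk z ≤ rk c ∨ rk c' ≤ rk z := by
      intro z hz
      rcases lt_trichotomy (rk z) (rk a) with h | h | h
      · exact Or.inl (hcmax z ⟨hz, h⟩)
      · exact absurd (hK.rk_injOn hΦ.2.1 (hCΦ hz) haΦ h) (fun e => haC (e ▸ hz))
      · exact Or.inr (hc'min z ⟨hz, h⟩)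
    have hlez : ∀ {Λ : Set α}, IsFlagOf Set.univ Λ → C ⊆ Λ →
        ∀ z ∈ Λ, rk z ≤ rk c → z ≤ c := by
      intro Λ hΛ hCΛ z hz hrk
      rcases eq_or_lt_of_le hrk with h | h
      · exact le_of_eq (hK.rk_injOn hΛ.2.1 hz (hCΛ hcC) h)
      · exact le_of_lt (hK.lt_of_rk_lt (hΛ.2.1 hz (hCΛ hcC)
          (fun e => absurd (congrArg rk e) (by omega))) h)
    have hgez : ∀ {Λ : Set α}, IsFlagOf Set.univ Λ → C ⊆ Λ →
        ∀ z ∈ Λ, rk c' ≤ rk z → c' ≤ z := by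
      intro Λ hΛ hCΛ z hz hrk
      rcases eq_or_lt_of_le hrk with h | h
      · exact le_of_eq (hK.rk_injOn hΛ.2.1 (hCΛ hc'C) hz h)
      · exact le_of_lt (hK.lt_of_rk_lt (hΛ.2.1 (hCΛ hc'C) hz
          (fun e => absurd (congrArg rk e) (by omega))) h)
    have hint : ∀ x : α, c < x → x < c' →
        x ∉ C ∧ (∀ z ∈ C, x ≠ z → x ≤ z ∨ z ≤ x) := by
      intro x hcx hxc'
      have hxrk1 : rk c < rk x := hK.rk_strictMono _ _ hcx
      have hxrk2 : rk x < rk c' := hK.rk_strictMono _ _ hxc'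
      constructor
      · intro hxC
        rcases hsplit x hxC with h | h <;> omega
      · intro z hz hne
        rcases hsplit z hz with h | h
        · refine Or.inr (le_trans ?_ (le_of_lt hcx))
          rcases eq_or_lt_of_le h with h' | h'
          · exact le_of_eq (hK.rk_injOn hC hz hcC h')
          · rcases eq_or_ne z c with rfl | hne'
            · exact le_refl _
            · rcases hC hz hcC hne' with h'' | h''
              · exact h''
              · exact absurd (hK.rk_strictMono _ _ (lt_of_le_of_ne h''
                  (Ne.symm hne'))) (by omega)
        · refine Or.inl (le_trans (le_of_lt hxc') ?_)
          rcases eq_or_lt_of_le h with h' | h'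
          · exact le_of_eq (hK.rk_injOn hC hc'C hz h')
          · rcases eq_or_ne c' z with rfl | hne'
            · exact le_refl _
            · rcases hC hc'C hz hne' with h'' | h''
              · exact h''
              · exact absurd (hK.rk_strictMono _ _ (lt_of_le_of_ne h''
                  (Ne.symm hne'))) (by omega)
    -- the faces of Φ and Ψ of rank rk c + 1
    have hrkc1 : rk c + 1 ∈ Set.Icc (-1 : ℤ) n := by
      have h1 := (hK.rk_mem c).1
      have h2 := (hK.rk_mem c').2
      simp only [Set.mem_Icc]; omega
    obtain ⟨A, hAΦ, hrkA⟩ := hK.flag_rk Φ hΦ (rk c + 1) hrkc1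
    obtain ⟨B, hBΨ, hrkB⟩ := hK.flag_rk Ψ hΨ (rk c + 1) hrkc1
    have hcA : c < A := hK.lt_of_rk_lt (hΦ.2.1 (hCΦ hcC) hAΦ
      (fun e => absurd (congrArg rk e) (by omega))) (by omega)
    have hAc' : A < c' := hK.lt_of_rk_lt (hΦ.2.1 hAΦ (hCΦ hc'C)
      (fun e => absurd (congrArg rk e) (by omega))) (by omega)
    have hcB : c < B := hK.lt_of_rk_lt (hΨ.2.1 (hCΨ hcC) hBΨ
      (fun e => absurd (congrArg rk e) (by omega))) (by omega)
    have hBc' : B < c' := hK.lt_of_rk_lt (hΨ.2.1 hBΨ (hCΨ hc'C)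
      (fun e => absurd (congrArg rk e) (by omega))) (by omega)
    obtain ⟨hAC, hAcomp⟩ := hint A hcA hAc'
    obtain ⟨hBC, hBcomp⟩ := hint B hcB hBc'
    by_cases hd : 2 ≤ rk c' - rk c - 1
    · -- use strong connectedness of the section (c, c')
      have hconn := hK.strong_conn c c' (le_of_lt (hcA.trans hAc')) hd A B hcA hAc' hcB hBc'
      have key : ∀ b, Relation.ReflTransGen
          (fun a b => c < a ∧ a < c' ∧ c < b ∧ b < c' ∧ (a ≤ b ∨ b ≤ a)) A b →
          ∀ M : Set α, IsFlagOf Set.univ M → C ⊆ M → b ∈ M →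
          Relation.ReflTransGen
            (fun A B => (IsFlagOf Set.univ A ∧ C ⊆ A) ∧
              (IsFlagOf Set.univ B ∧ C ⊆ B) ∧ FlagAdj A B) Φ M := by
        intro b hb
        induction hb with
        | refl =>
          intro M hM hCM hAM
          exact hrec A hAC hAcomp Φ M hΦ hM (Set.insert_subset hAΦ hCΦ)
            (Set.insert_subset hAM hCM)
        | tail hxy hR ihx =>
          rename_i x y
          intro M hM hCM hyM
          obtain ⟨hcx, hxc', hcy, hyc', hcomp⟩ := hR
          obtain ⟨hxC, hxcomp⟩ := hint x hcx hxc'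
          obtain ⟨hyC, hycomp⟩ := hint y hcy hyc'
          have hchain1 : IsChain (· ≤ ·) (insert y C) :=
            hC.insert (fun z hz hne => hycomp z hz hne)
          have hchain2 : IsChain (· ≤ ·) (insert x (insert y C)) := by
            refine hchain1.insert (fun z hz hne => ?_)
            rcases hz with rfl | hz
            · exact hcomp
            · exact hxcomp z hz hne
          obtain ⟨N, hsubN, hN, -⟩ := hK.chain_flag _ hchain2
          have h1 := ihx N hN
            (fun z hz => hsubN (Set.mem_insert_of_mem _ (Set.mem_insert_of_mem _ hz)))
            (hsubN (Set.mem_insert _ _))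
          have h2 := hrec y hyC hycomp N M hN hM
            (Set.insert_subset (hsubN (Set.mem_insert_of_mem _ (Set.mem_insert _ _)))
              (fun z hz => hsubN (Set.mem_insert_of_mem _ (Set.mem_insert_of_mem _ hz))))
            (Set.insert_subset hyM hCM)
          exact h1.trans h2
      exact key B hconn Ψ hΨ hCΨ hBΨ
    · -- rk c' = rk c + 2 : exchange the middle face
      have hrkc' : rk c' = rk c + 2 := by
        have h1 := hK.rk_strictMono _ _ hcA
        have h2 := hK.rk_strictMono _ _ hAc'
        omega
      have hAB : A ≠ B := fun e => hAC (hH A hAΦ (e ▸ hBΨ))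
      have hBΦ : B ∉ Φ := fun h => hAB (hK.rk_injOn hΦ.2.1 hAΦ h (by omega))
      set Φ' := insert B (Φ \ {A}) with hΦ'def
      have hchainΦ' : IsChain (· ≤ ·) Φ' := by
        refine (hΦ.2.1.mono Set.diff_subset).insert (fun z hz hne => ?_)
        obtain ⟨hzΦ, hzA⟩ := hz
        rcases lt_trichotomy (rk z) (rk c + 1) with h | h | h
        · exact Or.inr (le_trans (hlez hΦ hCΦ z hzΦ (by omega)) (le_of_lt hcB))
        · exact absurd (hK.rk_injOn hΦ.2.1 hzΦ hAΦ (by omega)) hzA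
        · exact Or.inl (le_trans (le_of_lt hBc') (hgez hΦ hCΦ z hzΦ (by omega)))
      have hBnot : B ∉ Φ \ {A} := fun h => hBΦ h.1
      have hcardΦ' : Φ'.ncard = (n + 2).toNat := by
        rw [hΦ'def, Set.ncard_insert_of_notMem hBnot ((hK.flag_finite hΦ).diff (t := {A})),
          Set.ncard_diff_singleton_of_mem hAΦ, hK.flag_ncard hΦ]
        omega
      have hΦ'flag : IsFlagOf Set.univ Φ' := hK.flag_iff.mpr ⟨hchainΦ', hcardΦ'⟩
      have hCΦ' : C ⊆ Φ' := fun z hz =>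
        Set.mem_insert_of_mem _ ⟨hCΦ hz, fun e => hAC (e ▸ hz)⟩
      have hd1 : Φ \ Φ' = {A} := by
        ext x
        simp only [hΦ'def, Set.mem_diff, Set.mem_insert_iff, Set.mem_singleton_iff]
        constructor
        · rintro ⟨hxΦ, hx⟩
          push_neg at hx
          exact hx.2 hxΦ
        · rintro rfl
          exact ⟨hAΦ, by push_neg; exact ⟨hAB, fun _ => rfl⟩⟩
      have hd2 : Φ' \ Φ = {B} := by
        ext x
        simp only [hΦ'def, Set.mem_diff, Set.mem_insert_iff, Set.mem_singleton_iff]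
        constructor
        · rintro ⟨hx, hxΦ⟩
          rcases hx with rfl | hx
          · rfl
          · exact absurd hx.1 hxΦ
        · rintro rfl
          exact ⟨Or.inl rfl, hBΦ⟩
      have hadj : FlagAdj Φ Φ' := by
        constructor
        · rw [hd1]; exact Set.ncard_singleton A
        · rw [hd2]; exact Set.ncard_singleton B
      refine Relation.ReflTransGen.head
        ⟨⟨hΦ, hCΦ⟩, ⟨hΦ'flag, hCΦ'⟩, hadj⟩ ?_
      exact hrec B hBC hBcomp Φ' Ψ hΦ'flag hΨ
        (Set.insert_subset (Set.mem_insert _ _) hCΦ')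
        (Set.insert_subset hBΨ hCΨ)

end Helpers3

/-- A complex is regular if its automorphism group acts transitively on flags. -/
def IsRegularIC (α : Type*) [PartialOrder α] : Prop :=
  ∀ Φ Ψ : Set α, IsFlagOf Set.univ Φ → IsFlagOf Set.univ Ψ →
    ∃ g : α ≃o α, ⇑g '' Φ = Ψ

/-- `Γ` is a flag-transitive subgroup of the automorphism group. -/
def FlagTrans {α : Type*} [PartialOrder α] (Γ : Subgroup (α ≃o α)) : Prop :=
  ∀ Φ Ψ : Set α, IsFlagOf Set.univ Φ → IsFlagOf Set.univ Ψ →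
    ∃ g ∈ Γ, ⇑g '' Φ = Ψ

/-- The distinguished generating subset `R_i`: the stabilizer in `Γ` of
`Φ \ {F_i}`, where `F` enumerates the base flag by rank. -/
def Rset {α : Type*} [PartialOrder α] (Γ : Subgroup (α ≃o α)) (F : ℤ → α)
    (n i : ℤ) : Set (α ≃o α) :=
  {g | g ∈ Γ ∧ ∀ j ∈ Set.Icc (-1 : ℤ) n, j ≠ i → g (F j) = F j}

/-- the stabilizer in a flag-transitive group `Γ` of the subchain
`Φ_J` of the base flag is the subgroup generated by the `R_j` with `j ∉ J`
(with the convention that `R_{-1}` is always included, matching `Γ_∅ = R_{-1}`). -/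
theorem stabilizer_of_subchain_eq_closure
    {α : Type*} [PartialOrder α] [BoundedOrder α] (n : ℤ) (rk : α → ℤ)
    (hn : 1 ≤ n) (hK : IncComplex α n rk)
    (Γ : Subgroup (α ≃o α)) (hΓ : FlagTrans Γ)
    (F : ℤ → α) (hFflag : IsFlagOf Set.univ (F '' Set.Icc (-1 : ℤ) n))
    (hFrk : ∀ i ∈ Set.Icc (-1 : ℤ) n, rk (F i) = i)
    (J : Set ℤ) (hJ : J ⊆ Set.Icc (-1 : ℤ) n) :
    {g : α ≃o α | g ∈ Γ ∧ ∀ j ∈ J, g (F j) = F j} =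
      ↑(Subgroup.closure
        (Rset Γ F n (-1) ∪ ⋃ j ∈ Set.Icc (-1 : ℤ) n \ J, Rset Γ F n j)) := by
  set Φ : Set α := F '' Set.Icc (-1 : ℤ) n with hΦdef
  have hm1 : (-1 : ℤ) ∈ Set.Icc (-1 : ℤ) n := by simp only [Set.mem_Icc]; omega
  have hmn : n ∈ Set.Icc (-1 : ℤ) n := by simp only [Set.mem_Icc]; omega
  have hbotF : F (-1) = ⊥ := hK.eq_bot (hFrk (-1) hm1)
  have htopF : F n = ⊤ := hK.eq_top (hFrk n hmn)
  have hbotΦ : (⊥ : α) ∈ Φ := ⟨-1, hm1, hbotF⟩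
  have htopΦ : (⊤ : α) ∈ Φ := ⟨n, hmn, htopF⟩
  set gens : Set (α ≃o α) :=
    Rset Γ F n (-1) ∪ ⋃ j ∈ Set.Icc (-1 : ℤ) n \ J, Rset Γ F n j with hgensdef
  have hgensΓ : gens ⊆ ↑Γ := by
    rintro g (hg | hg)
    · exact hg.1
    · obtain ⟨_, ⟨j, rfl⟩, _, ⟨hj, rfl⟩, hg⟩ := hg
      exact hg.1
  have hclΓ : Subgroup.closure gens ≤ Γ := (Subgroup.closure_le Γ).mpr hgensΓ
  -- every element of the closure fixes `F j` for `j ∈ J`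
  have hfix : ∀ g ∈ Subgroup.closure gens, ∀ j ∈ J, g (F j) = F j := by
    intro g hg
    refine Subgroup.closure_induction ?_ ?_ ?_ ?_ hg
    · rintro x (hx | hx) j hj
      · rcases eq_or_ne j (-1) with rfl | hne
        · rw [hbotF]
          exact OrderIso.map_bot x
        · exact hx.2 j (hJ hj) hne
      · obtain ⟨_, ⟨i, rfl⟩, _, ⟨hi, rfl⟩, hx⟩ := hx
        exact hx.2 j (hJ hj) (fun e => hi.2 (e ▸ hj))
    · intro j hj; rfl
    · intro x y _ _ hx hy j hj
      show x (y (F j)) = F j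
      rw [hy j hj, hx j hj]
    · intro x _ hx j hj
      show x.symm (F j) = F j
      nth_rewrite 1 [← hx j hj]
      exact x.symm_apply_apply _
  -- the key direction: stabilizer elements lie in the closure
  have main : ∀ g : α ≃o α, g ∈ Γ → (∀ j ∈ J, g (F j) = F j) →
      g ∈ Subgroup.closure gens := by
    intro g hgΓ hgfix
    have hΨflag : IsFlagOf Set.univ (⇑g '' Φ) := hK.flag_image g hFflag
    set C : Set α := insert ⊥ (insert ⊤ (F '' J)) with hCdef
    have hCΦ : C ⊆ Φ :=
      Set.insert_subset hbotΦ (Set.insert_subset htopΦ (Set.image_mono hJ))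
    have hCchain : IsChain (· ≤ ·) C := hFflag.2.1.mono hCΦ
    have hCΨ : C ⊆ ⇑g '' Φ := by
      rintro z (rfl | rfl | ⟨j, hj, rfl⟩)
      · exact ⟨⊥, hbotΦ, OrderIso.map_bot g⟩
      · exact ⟨⊤, htopΦ, OrderIso.map_top g⟩
      · exact ⟨F j, ⟨j, hJ hj, rfl⟩, hgfix j hj⟩
    have hseq := chain_flag_conn hK ((n + 2).toNat) C hCchain (Set.mem_insert _ _)
      (Set.mem_insert_of_mem _ (Set.mem_insert _ _)) (by omega)
      Φ (⇑g '' Φ) hFflag hΨflag hCΦ hCΨ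
    have key : ∀ Ψ' : Set α, Relation.ReflTransGen
        (fun A B => (IsFlagOf Set.univ A ∧ C ⊆ A) ∧
          (IsFlagOf Set.univ B ∧ C ⊆ B) ∧ FlagAdj A B) Φ Ψ' →
        ∃ h ∈ Subgroup.closure gens, ⇑h '' Φ = Ψ' := by
      intro Ψ' hseq'
      induction hseq' with
      | refl =>
        exact ⟨1, one_mem _, by simp [show ⇑(1 : α ≃o α) = id from rfl]⟩
      | tail hxy hR ihx =>
        rename_i Ψ₁ Ψ₂
        obtain ⟨h, hhcl, hhΦ⟩ := ihx
        obtain ⟨⟨hΨ₁f, hCΨ₁⟩, ⟨hΨ₂f, hCΨ₂⟩, hadj⟩ := hR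
        set Λ : Set α := ⇑h⁻¹ '' Ψ₂ with hΛdef
        have hΛf : IsFlagOf Set.univ Λ := hK.flag_image h⁻¹ hΨ₂f
        have hinv : ⇑(h⁻¹ : α ≃o α) = ⇑h.symm := rfl
        have hΦΛ1 : ⇑h⁻¹ '' Ψ₁ = Φ := by
          rw [← hhΦ, hinv]; simp [Set.image_image]
        have hdiff1 : Φ \ Λ = ⇑h⁻¹ '' (Ψ₁ \ Ψ₂) := by
          rw [← hΦΛ1, hΛdef, Set.image_diff (EquivLike.injective _)]
        have hcard1 : (Φ \ Λ).ncard = 1 := by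
          rw [hdiff1, Set.ncard_image_of_injective _ (EquivLike.injective _)]
          exact hadj.1
        obtain ⟨x, hx⟩ := Set.ncard_eq_one.mp hcard1
        have hxΦ : x ∈ Φ := by
          have : x ∈ Φ \ Λ := hx ▸ Set.mem_singleton x
          exact this.1
        obtain ⟨i, hiIcc, rfl⟩ := hxΦ
        have hΛsub : ∀ j ∈ Set.Icc (-1 : ℤ) n, j ≠ i → F j ∈ Λ := by
          intro j hj hne
          by_contra hnot
          have : F j ∈ Φ \ Λ := ⟨⟨j, hj, rfl⟩, hnot⟩
          rw [hx, Set.mem_singleton_iff] at this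
          exact hne (by rw [← hFrk j hj, this, hFrk i hiIcc])
        obtain ⟨r, hrΓ, hrΦ⟩ := hΓ Φ Λ hFflag hΛf
        have hrfix : ∀ j ∈ Set.Icc (-1 : ℤ) n, j ≠ i → r (F j) = F j :=
          fun j hj hne =>
            fixes_of_mem hK hn hFflag hFrk r hΛf hrΦ hj (hΛsub j hj hne)
        have hiJ : i ∉ J := by
          intro hiJ
          have h1 : F i ∈ Ψ₂ := hCΨ₂
            (Set.mem_insert_of_mem _ (Set.mem_insert_of_mem _ ⟨i, hiJ, rfl⟩))
          have h2 : h⁻¹ (F i) = F i := by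
            have h3 := hfix h hhcl i hiJ
            show h.symm (F i) = F i
            nth_rewrite 1 [← h3]
            exact h.symm_apply_apply _
          have h4 : F i ∈ Λ := ⟨F i, h1, h2⟩
          have h5 : F i ∈ Φ \ Λ := hx ▸ Set.mem_singleton _
          exact h5.2 h4
        have hrgens : r ∈ gens := by
          refine Or.inr (Set.mem_biUnion (⟨hiIcc, hiJ⟩ : i ∈ Set.Icc (-1:ℤ) n \ J) ?_)
          exact ⟨hrΓ, hrfix⟩
        refine ⟨h * r, mul_mem hhcl (Subgroup.subset_closure hrgens), ?_⟩
        rw [show ⇑(h * r) = ⇑h ∘ ⇑r from rfl, Set.image_comp, hrΦ, hΛdef, hinv]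
        simp [Set.image_image]
    obtain ⟨h, hhcl, hhΦ⟩ := key _ hseq
    have himg : ⇑(h⁻¹ * g) '' Φ = Φ := by
      rw [show ⇑(h⁻¹ * g) = ⇑h⁻¹ ∘ ⇑g from rfl, Set.image_comp, ← hhΦ,
        show ⇑(h⁻¹ : α ≃o α) = ⇑h.symm from rfl]
      simp [Set.image_image]
    have hmem : (h⁻¹ * g) ∈ Rset Γ F n (-1) := by
      refine ⟨Γ.mul_mem (Γ.inv_mem (hclΓ hhcl)) hgΓ, fun j hj _ => ?_⟩
      exact fixes_of_mem hK hn hFflag hFrk _ hFflag himg hj ⟨j, hj, rfl⟩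
    have : g = h * (h⁻¹ * g) := by group
    rw [this]
    exact mul_mem hhcl (Subgroup.subset_closure (Or.inl hmem))
  ext g
  constructor
  · rintro ⟨h1, h2⟩
    exact main g h1 h2
  · intro hg
    exact ⟨hclΓ hg, hfix g hg⟩
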